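/- arXiv:2303.15828 — 4 statements merged into one kernel-verified Lean document; each statement's English description precedes it below -/
import Mathlib

section
/- Let u₁(r) = (λε/6)(r² − r₀²) + μ on [0, r₀] and u₂(r) = u_∞ + (λ/6)(r² − R²) + ((r−R)r₀)/((r₀−R)r) · (μ − u_∞ − (λ/6)(r₀² − R²)) on [r₀, R]. Then u₁'(r₀) = u₂'(r₀) holds if and only if λ = 3(u_∞ − μ) / ((ε−1)r₀²(R−r₀)/R + (1/2)(R² − r₀²)). -/
open Real Set

theorem stmt_1 (R r0 lam eps uinf mu : ℝ) (hr0 : 0 < r0) (hr0R : r0 < R)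
    (hlam : 0 < lam) (heps : 0 < eps) (heps1 : eps ≠ 1)
    (hmu : 0 < mu) (huinf : mu < uinf)
    (hden : (eps - 1) * r0 ^ 2 * (R - r0) / R + (1 / 2) * (R ^ 2 - r0 ^ 2) ≠ 0) :
    let u1 : ℝ → ℝ := fun r => lam * eps / 6 * (r ^ 2 - r0 ^ 2) + mu
    let u2 : ℝ → ℝ := fun r =>
      uinf + lam / 6 * (r ^ 2 - R ^ 2) +
        (r - R) * r0 / ((r0 - R) * r) * (mu - uinf - lam / 6 * (r0 ^ 2 - R ^ 2))
    (deriv u1 r0 = deriv u2 r0 ↔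
      lam = 3 * (uinf - mu) /
        ((eps - 1) * r0 ^ 2 * (R - r0) / R + (1 / 2) * (R ^ 2 - r0 ^ 2))) := by
  intro u1 u2
  have hr0ne : r0 ≠ 0 := hr0.ne'
  have hRpos : (0:ℝ) < R := hr0.trans hr0R
  have hRne : R ≠ 0 := hRpos.ne'
  have hsub : r0 - R ≠ 0 := by intro h; rw [sub_eq_zero] at h; exact absurd h (ne_of_lt hr0R)
  set C : ℝ := mu - uinf - lam / 6 * (r0 ^ 2 - R ^ 2) with hC
  have h1 : deriv u1 r0 = lam * eps / 6 * (2 * r0) := by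
    have : HasDerivAt u1 (lam * eps / 6 * (2 * r0)) r0 := by
      have := (hasDerivAt_pow 2 r0).sub_const (r0 ^ 2)
      simpa [u1] using (this.const_mul (lam * eps / 6)).add_const mu
    exact this.deriv
  have h2 : deriv u2 r0 = lam / 6 * (2 * r0) + R / ((r0 - R) * r0) * C := by
    have hq : HasDerivAt (fun r : ℝ => (r - R) * r0 / ((r0 - R) * r))
        (R / ((r0 - R) * r0)) r0 := by
      have hnum : HasDerivAt (fun r : ℝ => r - R) 1 r0 := (hasDerivAt_id r0).sub_const R
      have hden' : HasDerivAt (fun r : ℝ => (r0 - R) * r) ((r0 - R) * 1) r0 :=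
        (hasDerivAt_id r0).const_mul (r0 - R)
      have hne : (r0 - R) * r0 ≠ 0 := mul_ne_zero hsub hr0ne
      have h0 := (hnum.div hden' hne).mul_const r0
      have hfun : (fun r : ℝ => (r - R) * r0 / ((r0 - R) * r)) =
          (fun r : ℝ => (r - R) / ((r0 - R) * r) * r0) := by funext r; ring
      rw [hfun]
      refine h0.congr_deriv ?_
      have hne2 : ((r0 - R) * r0) ^ 2 ≠ 0 := pow_ne_zero 2 hne
      rw [div_mul_eq_mul_div, div_eq_div_iff hne2 hne]
      ring
    have : HasDerivAt u2 (lam / 6 * (2 * r0) + R / ((r0 - R) * r0) * C) r0 := by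
      have hp : HasDerivAt (fun r : ℝ => uinf + lam / 6 * (r ^ 2 - R ^ 2)) (lam / 6 * (2 * r0)) r0 := by
        have := ((hasDerivAt_pow 2 r0).sub_const (R ^ 2)).const_mul (lam / 6)
        simpa using this.const_add uinf
      exact hp.add (hq.mul_const C)
    exact this.deriv
  rw [h1, h2, hC, eq_div_iff hden]
  constructor <;> intro h
  · field_simp at h ⊢
    linear_combination (-1 : ℝ) * h
  · field_simp at h ⊢
    linear_combination (-1 : ℝ) * h
end

section
/- For ε > 3/2, the function g(r) = 3(u_∞ − μ) / ((ε−1)r²(R−r)/R + (1/2)(R² − r²)) on (0,R) attains a global minimum at r* = (2ε−3)R/(3(ε−1)), with minimum value g(r*) = 27(u_∞ − μ)(ε−1)² / (ε² R² (4ε/3 − 3/2)). -/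
open Real Set

theorem stmt_2 (R uinf mu eps : ℝ) (hR : 0 < R) (hmu : 0 < mu) (huinf : mu < uinf)
    (heps : 3 / 2 < eps) :
    let g : ℝ → ℝ := fun r =>
      3 * (uinf - mu) / ((eps - 1) * r ^ 2 * (R - r) / R + (1 / 2) * (R ^ 2 - r ^ 2))
    let rstar : ℝ := (2 * eps - 3) * R / (3 * (eps - 1))
    rstar ∈ Ioo (0:ℝ) R ∧
    (∀ r ∈ Ioo (0:ℝ) R, g rstar ≤ g r) ∧
    g rstar = 27 * (uinf - mu) * (eps - 1) ^ 2 / (eps ^ 2 * R ^ 2 * (4 * eps / 3 - 3 / 2)) := by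
  intro g rstar
  have ha : (0:ℝ) < eps - 1 := by linarith
  have hRne : R ≠ 0 := ne_of_gt hR
  have hC : (0:ℝ) < 3 * (uinf - mu) := by linarith
  have hrs0 : 0 < rstar := div_pos (by nlinarith) (by linarith)
  have hrsR : rstar < R := by
    rw [div_lt_iff₀ (by linarith)]; nlinarith
  have hrsIoo : rstar ∈ Ioo (0:ℝ) R := ⟨hrs0, hrsR⟩
  have hDpos : ∀ r ∈ Ioo (0:ℝ) R,
      0 < (eps - 1) * r ^ 2 * (R - r) / R + (1 / 2) * (R ^ 2 - r ^ 2) := by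
    rintro r ⟨hr0, hrR⟩
    have h1 : 0 < (eps - 1) * r ^ 2 * (R - r) / R :=
      div_pos (mul_pos (mul_pos ha (pow_pos hr0 2)) (sub_pos.mpr hrR)) hR
    have h2 : 0 < (1 / 2) * (R ^ 2 - r ^ 2) := by nlinarith
    linarith
  have hDrs := hDpos rstar hrsIoo
  refine ⟨hrsIoo, ?_, ?_⟩
  · rintro r hr
    have hDr := hDpos r hr
    obtain ⟨hr0, hrR⟩ := hr
    have hkey : ((eps - 1) * r ^ 2 * (R - r) / R + (1 / 2) * (R ^ 2 - r ^ 2))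
        - ((eps - 1) * rstar ^ 2 * (R - rstar) / R + (1 / 2) * (R ^ 2 - rstar ^ 2))
        = -((r - rstar) ^ 2 * (6 * (eps - 1) * r + (2 * eps - 3) * R)) / (6 * R) := by
      show ((eps - 1) * r ^ 2 * (R - r) / R + (1 / 2) * (R ^ 2 - r ^ 2))
        - ((eps - 1) * ((2 * eps - 3) * R / (3 * (eps - 1))) ^ 2
            * (R - (2 * eps - 3) * R / (3 * (eps - 1))) / R
          + (1 / 2) * (R ^ 2 - ((2 * eps - 3) * R / (3 * (eps - 1))) ^ 2))
        = -((r - (2 * eps - 3) * R / (3 * (eps - 1))) ^ 2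
            * (6 * (eps - 1) * r + (2 * eps - 3) * R)) / (6 * R)
      field_simp
      ring
    have hnn : 0 ≤ (r - rstar) ^ 2 * (6 * (eps - 1) * r + (2 * eps - 3) * R) / (6 * R) := by
      apply div_nonneg _ (by linarith)
      apply mul_nonneg (sq_nonneg _)
      nlinarith
    have hle : ((eps - 1) * r ^ 2 * (R - r) / R + (1 / 2) * (R ^ 2 - r ^ 2))
        ≤ ((eps - 1) * rstar ^ 2 * (R - rstar) / R + (1 / 2) * (R ^ 2 - rstar ^ 2)) := by
      have : -((r - rstar) ^ 2 * (6 * (eps - 1) * r + (2 * eps - 3) * R)) / (6 * R)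
          = -((r - rstar) ^ 2 * (6 * (eps - 1) * r + (2 * eps - 3) * R) / (6 * R)) := by
        ring
      linarith [hkey, hnn, this ▸ hkey]
    exact div_le_div_of_nonneg_left (le_of_lt hC) hDr hle
  · have hden : eps ^ 2 * R ^ 2 * (4 * eps / 3 - 3 / 2) ≠ 0 := by
      have : (0:ℝ) < eps ^ 2 * R ^ 2 * (4 * eps / 3 - 3 / 2) := by
        apply mul_pos (mul_pos (by positivity) (by positivity))
        linarith
      exact ne_of_gt this
    show 3 * (uinf - mu) / ((eps - 1) * ((2 * eps - 3) * R / (3 * (eps - 1))) ^ 2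
        * (R - (2 * eps - 3) * R / (3 * (eps - 1))) / R
        + (1 / 2) * (R ^ 2 - ((2 * eps - 3) * R / (3 * (eps - 1))) ^ 2))
      = 27 * (uinf - mu) * (eps - 1) ^ 2 / (eps ^ 2 * R ^ 2 * (4 * eps / 3 - 3 / 2))
    have hdpos : (0:ℝ) < eps ^ 2 * R ^ 2 * (4 * eps / 3 - 3 / 2) := by
      apply mul_pos (mul_pos (by positivity) (by positivity)); linarith
    have hDrs' : (eps - 1) * ((2 * eps - 3) * R / (3 * (eps - 1))) ^ 2
        * (R - (2 * eps - 3) * R / (3 * (eps - 1))) / R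
        + (1 / 2) * (R ^ 2 - ((2 * eps - 3) * R / (3 * (eps - 1))) ^ 2) ≠ 0 := by
      have := hDrs
      simp only [rstar] at this
      linarith
    rw [div_eq_div_iff hDrs' (ne_of_gt hdpos)]
    field_simp
    ring
end

section
/- For 0 < ε ≤ 3/2 with ε ≠ 1, the function g(r) = 3(u_∞ − μ) / ((ε−1)r²(R−r)/R + (1/2)(R² − r²)) is strictly increasing on (0,R), and its infimum as r → 0⁺ equals 6(u_∞ − μ)/R². -/
open Real Set

theorem stmt_3 (R uinf mu eps : ℝ) (hR : 0 < R) (hmu : 0 < mu) (huinf : mu < uinf)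
    (heps0 : 0 < eps) (heps : eps ≤ 3 / 2) (heps1 : eps ≠ 1) :
    let g : ℝ → ℝ := fun r =>
      3 * (uinf - mu) / ((eps - 1) * r ^ 2 * (R - r) / R + (1 / 2) * (R ^ 2 - r ^ 2))
    StrictMonoOn g (Ioo (0:ℝ) R) ∧
    Filter.Tendsto g (nhdsWithin 0 (Ioi 0)) (nhds (6 * (uinf - mu) / R ^ 2)) := by
  intro g
  have hRne : R ≠ 0 := hR.ne'
  have hC : 0 < 3 * (uinf - mu) := by linarith
  have hD : ∀ r ∈ Ioo (0:ℝ) R,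
      0 < (eps - 1) * r ^ 2 * (R - r) / R + (1 / 2) * (R ^ 2 - r ^ 2) := by
    rintro r ⟨hr0, hrR⟩
    rw [div_add' _ _ _ hRne]
    apply div_pos _ hR
    nlinarith [mul_pos heps0 (mul_pos (mul_pos hr0 hr0) (sub_pos.2 hrR)),
      mul_nonneg (sq_nonneg (R - r)) (by linarith : (0:ℝ) ≤ R + 2 * r)]
  constructor
  · rintro a ⟨ha0, haR⟩ b ⟨hb0, hbR⟩ hab
    have hDa := hD a ⟨ha0, haR⟩
    have hDb := hD b ⟨hb0, hbR⟩
    have hlt : (eps - 1) * b ^ 2 * (R - b) / R + (1 / 2) * (R ^ 2 - b ^ 2) <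
        (eps - 1) * a ^ 2 * (R - a) / R + (1 / 2) * (R ^ 2 - a ^ 2) := by
      rw [div_add' _ _ _ hRne, div_add' _ _ _ hRne, div_lt_div_iff₀ hR hR]
      rcases le_or_gt eps 1 with h1 | h1
      · nlinarith [mul_pos (sub_pos.2 hab) (mul_pos heps0 (mul_pos hR (by linarith : (0:ℝ) < a + b))),
          mul_nonneg (mul_nonneg (by linarith : (0:ℝ) ≤ 1 - eps) (sub_pos.2 hab).le)
            (mul_pos ha0 (sub_pos.2 haR)).le,
          mul_nonneg (mul_nonneg (by linarith : (0:ℝ) ≤ 1 - eps) (sub_pos.2 hab).le)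
            (mul_pos hb0 (sub_pos.2 hbR)).le,
          mul_nonneg (mul_nonneg (by linarith : (0:ℝ) ≤ 1 - eps) (sub_pos.2 hab).le)
            (sq_nonneg (a - b)), mul_pos hR (mul_pos ha0 hb0)]
      · nlinarith [mul_pos (sub_pos.2 hab) (mul_pos (by linarith : (0:ℝ) < eps - 1)
            (by nlinarith : (0:ℝ) < a ^ 2 + a * b + b ^ 2)),
          mul_nonneg (sub_pos.2 hab).le (mul_nonneg (mul_nonneg
            (by linarith : (0:ℝ) ≤ 3 - 2 * eps) hR.le) (by linarith : (0:ℝ) ≤ a + b))]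
    exact div_lt_div_of_pos_left hC hDb hlt
  · have hcont : ContinuousAt (fun r : ℝ =>
        (eps - 1) * r ^ 2 * (R - r) / R + (1 / 2) * (R ^ 2 - r ^ 2)) 0 := by
      fun_prop
    have hne : (eps - 1) * (0:ℝ) ^ 2 * (R - 0) / R + (1 / 2) * (R ^ 2 - 0 ^ 2) ≠ 0 := by
      have : (eps - 1) * (0:ℝ) ^ 2 * (R - 0) / R + (1 / 2) * (R ^ 2 - 0 ^ 2) = R ^ 2 / 2 := by
        field_simp
        ring
      rw [this]; positivity
    have hg : ContinuousAt g 0 := ContinuousAt.div continuousAt_const hcont hne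
    have hval : g 0 = 6 * (uinf - mu) / R ^ 2 := by
      show 3 * (uinf - mu) / ((eps - 1) * (0:ℝ) ^ 2 * (R - 0) / R + (1 / 2) * (R ^ 2 - 0 ^ 2))
        = 6 * (uinf - mu) / R ^ 2
      rw [show (eps - 1) * (0:ℝ) ^ 2 * (R - 0) / R + (1 / 2) * (R ^ 2 - 0 ^ 2) = R ^ 2 / 2 by
        field_simp; ring]
      field_simp
      ring
    exact (hval ▸ hg.tendsto).mono_left nhdsWithin_le_nhds
end

section
/- Cardano's depressed cubic (case Δ < 0): let p < 0 and q be real with Δ := q² + (4/27)p³ < 0. Then for each k ∈ {0,1,2}, z_k = 2√(−p/3)·cos((1/3)·arccos((−q/2)·√(27/(−p³))) + 2kπ/3) is a root of z³ + pz + q = 0, and these three roots are distinct. -/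
open Real

set_option maxHeartbeats 1600000 in
theorem stmt_18 (p q : ℝ) (hp : p < 0) (hdelta : q ^ 2 + (4 / 27) * p ^ 3 < 0) :
    let z : ℕ → ℝ := fun k =>
      2 * Real.sqrt (-p / 3) *
        Real.cos ((1 / 3) * Real.arccos ((-q / 2) * Real.sqrt (27 / (-p ^ 3))) +
          2 * k * Real.pi / 3)
    (∀ k < 3, (z k) ^ 3 + p * z k + q = 0) ∧
    z 0 ≠ z 1 ∧ z 0 ≠ z 2 ∧ z 1 ≠ z 2 := by
  intro z
  have hp3 : (0:ℝ) < -p ^ 3 := by nlinarith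
  set s : ℝ := Real.sqrt (27 / (-p ^ 3)) with hsdef
  set c : ℝ := (-q / 2) * s with hcdef
  have hs0 : (0:ℝ) ≤ 27 / (-p ^ 3) := by positivity
  have hs : s ^ 2 = 27 / (-p ^ 3) := Real.sq_sqrt hs0
  have hsnn : 0 ≤ s := Real.sqrt_nonneg _
  have hc2 : c ^ 2 < 1 := by
    have h1 : c ^ 2 = q ^ 2 * 27 / (4 * (-p ^ 3)) := by
      rw [hcdef, mul_pow, hs]; field_simp; ring
    rw [h1, div_lt_one (by positivity)]
    nlinarith
  have hclt : c < 1 := by nlinarith [sq_nonneg (c - 1)]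
  have hcgt : -1 < c := by nlinarith [sq_nonneg (c + 1)]
  set θ : ℝ := Real.arccos c with hθdef
  have hθpos : 0 < θ := Real.arccos_pos.mpr hclt
  have hθlt : θ < π := by
    have h := Real.neg_pi_div_two_lt_arcsin.mpr hcgt
    rw [hθdef, Real.arccos]; linarith
  have hcosθ : Real.cos θ = c := Real.cos_arccos hcgt.le hclt.le
  set r : ℝ := Real.sqrt (-p / 3) with hrdef
  have hr2 : r ^ 2 = -p / 3 := Real.sq_sqrt (by linarith)
  have hrpos : 0 < r := Real.sqrt_pos.mpr (by linarith)
  have hkey : r ^ 3 * s = 1 := by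
    have h6 : (r ^ 3 * s) ^ 2 = 1 := by
      have : (r ^ 3 * s) ^ 2 = (r ^ 2) ^ 3 * s ^ 2 := by ring
      rw [this, hr2, hs, mul_div_assoc', div_eq_one_iff_eq (ne_of_gt hp3)]
      ring
    have h7 : 0 ≤ r ^ 3 * s := mul_nonneg (pow_nonneg hrpos.le 3) hsnn
    nlinarith [sq_nonneg (r ^ 3 * s - 1), sq_nonneg (r ^ 3 * s + 1)]
  have hp_eq : p = -3 * r ^ 2 := by rw [hr2]; ring
  have hroot : ∀ k : ℕ, (z k) ^ 3 + p * z k + q = 0 := by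
    intro k
    have hzk : z k = 2 * r * Real.cos ((1/3) * θ + 2 * k * π / 3) := rfl
    set x : ℝ := (1/3) * θ + 2 * k * π / 3 with hxdef
    have h3x : 3 * x = θ + k * (2 * π) := by rw [hxdef]; ring
    have hcos3 : Real.cos (3 * x) = c := by
      rw [h3x, Real.cos_add_nat_mul_two_pi, hcosθ]
    have : (z k) ^ 3 + p * z k + q = 2 * r ^ 3 * Real.cos (3 * x) + q := by
      rw [Real.cos_three_mul, hzk, hp_eq]; ring
    rw [this, hcos3, hcdef]
    linear_combination (-q) * hkey
  have hπ := Real.pi_pos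
  set a : ℝ := (1/3) * θ with hadef
  have ha0 : 0 < a := by rw [hadef]; linarith
  have ha1 : a < π / 3 := by rw [hadef]; linarith
  have c0 : 1/2 < Real.cos a := by
    have := Real.cos_lt_cos_of_nonneg_of_le_pi (le_of_lt ha0) (by linarith) ha1
    rwa [Real.cos_pi_div_three] at this
  have h23 : Real.cos (2 * π / 3) = -(1/2) := by
    have he : (2 * π / 3 : ℝ) = π - π / 3 := by ring
    rw [he, Real.cos_pi_sub, Real.cos_pi_div_three]
  have c1 : Real.cos (a + 2 * π / 3) < -(1/2) := by
    have := Real.cos_lt_cos_of_nonneg_of_le_pi (x := 2 * π / 3) (y := a + 2 * π / 3)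
      (by linarith) (by linarith) (by linarith)
    rwa [h23] at this
  have hb : Real.cos (a + 4 * π / 3) = Real.cos (2 * π / 3 - a) := by
    rw [← Real.cos_two_pi_sub (a + 4 * π / 3)]
    ring_nf
  have c2u : Real.cos (a + 4 * π / 3) < 1/2 := by
    rw [hb]
    have := Real.cos_lt_cos_of_nonneg_of_le_pi (x := π / 3) (y := 2 * π / 3 - a)
      (by linarith) (by linarith) (by linarith)
    rwa [Real.cos_pi_div_three] at this
  have c2l : -(1/2) < Real.cos (a + 4 * π / 3) := by
    rw [hb]
    have := Real.cos_lt_cos_of_nonneg_of_le_pi (x := 2 * π / 3 - a) (y := 2 * π / 3)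
      (by linarith) (by linarith) (by linarith)
    rwa [h23] at this
  have hz : ∀ k : ℕ, z k = 2 * r * Real.cos (a + 2 * k * π / 3) := fun _ => rfl
  have e0 : a + 2 * ((0:ℕ):ℝ) * π / 3 = a := by push_cast; ring
  have e1 : a + 2 * ((1:ℕ):ℝ) * π / 3 = a + 2 * π / 3 := by push_cast; ring
  have e2 : a + 2 * ((2:ℕ):ℝ) * π / 3 = a + 4 * π / 3 := by push_cast; ring
  have hz0 : z 0 = 2 * r * Real.cos a := by rw [hz 0, e0]
  have hz1 : z 1 = 2 * r * Real.cos (a + 2 * π / 3) := by rw [hz 1, e1]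
  have hz2 : z 2 = 2 * r * Real.cos (a + 4 * π / 3) := by rw [hz 2, e2]
  refine ⟨fun k _ => hroot k, ?_, ?_, ?_⟩
  · rw [hz0, hz1]; intro h
    nlinarith [mul_pos hrpos (show (0:ℝ) < Real.cos a - Real.cos (a + 2 * π / 3) by linarith)]
  · rw [hz0, hz2]; intro h
    nlinarith [mul_pos hrpos (show (0:ℝ) < Real.cos a - Real.cos (a + 4 * π / 3) by linarith)]
  · rw [hz1, hz2]; intro h
    nlinarith [mul_pos hrpos (show (0:ℝ) < Real.cos (a + 4 * π / 3) - Real.cos (a + 2 * π / 3) by linarith)]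
end
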